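/- Let p be an odd prime, ζ a primitive p-th complex root of unity, α = (1+√5)/2, β = (1-√5)/2, g a generator of (ℤ/pℤ)^*, and R the set of nonzero quadratic residues modulo p. Define Γ = ∏_{r ∈ R} (α - ζ^r β) and Γ' = ∏_{r ∈ R} (α - ζ^{g r} β). Then F_p = Γ · Γ'. -/

import Mathlib

lemma aux_isSquare_mul_of_not_of_not {p : ℕ} [Fact p.Prime] {a b : ZMod p}
    (ha : a ≠ 0) (hb : b ≠ 0) (hna : ¬ IsSquare a) (hnb : ¬ IsSquare b) :
    IsSquare (a * b) := by
  have hca : quadraticChar (ZMod p) a = -1 :=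
    (quadraticChar_neg_one_iff_not_isSquare).2 hna
  have hcb : quadraticChar (ZMod p) b = -1 :=
    (quadraticChar_neg_one_iff_not_isSquare).2 hnb
  have hab : a * b ≠ 0 := mul_ne_zero ha hb
  have : quadraticChar (ZMod p) (a * b) = 1 := by
    rw [map_mul, hca, hcb]; ring
  exact (quadraticChar_one_iff_isSquare hab).1 this

lemma aux_not_isSquare_mul {p : ℕ} [Fact p.Prime] {a b : ZMod p}
    (hb : b ≠ 0) (hna : ¬ IsSquare a) (hsb : IsSquare b) :
    ¬ IsSquare (a * b) := by
  have hca : quadraticChar (ZMod p) a = -1 :=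
    (quadraticChar_neg_one_iff_not_isSquare).2 hna
  have hcb : quadraticChar (ZMod p) b = 1 :=
    (quadraticChar_one_iff_isSquare hb).2 hsb
  have : quadraticChar (ZMod p) (a * b) = -1 := by
    rw [map_mul, hca, hcb]; ring
  exact (quadraticChar_neg_one_iff_not_isSquare).1 this

open Complex Classical in
theorem fib_eq_gamma_mul_gamma' (p : ℕ) (hp : p.Prime) (hodd : Odd p)
    (ζ : ℂ) (hζ : ζ = Complex.exp (2 * Real.pi * Complex.I / p))
    (α β : ℂ) (hα : α = (1 + Real.sqrt 5) / 2) (hβ : β = (1 - Real.sqrt 5) / 2)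
    (g : ℕ) (hg : orderOf (g : ZMod p) = p - 1)
    (R : Finset ℕ) (hR : R = (Finset.Icc 1 (p - 1)).filter (fun r : ℕ => IsSquare (r : ZMod p))) :
    (Nat.fib p : ℂ) =
      (∏ r ∈ R, (α - ζ ^ r * β)) * (∏ r ∈ R, (α - ζ ^ (g * r) * β)) := by
  haveI : Fact p.Prime := ⟨hp⟩
  have hp2 : p ≠ 2 := by rintro rfl; revert hodd; decide
  have hp3 : 3 ≤ p := by have := hp.two_le; omega
  have hppos : 0 < p := hp.pos
  have hprim : IsPrimitiveRoot ζ p := by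
    rw [hζ]; exact Complex.isPrimitiveRoot_exp p hp.ne_zero
  have hζp : ζ ^ p = 1 := hprim.pow_eq_one
  -- g is a nonzero nonsquare
  have hgne : (g : ZMod p) ≠ 0 := by
    intro h0
    have h1 := pow_orderOf_eq_one (g : ZMod p)
    rw [hg, h0, zero_pow (by omega : p - 1 ≠ 0)] at h1
    exact zero_ne_one h1
  have hgns : ¬ IsSquare ((g : ZMod p)) := by
    rintro ⟨x, hx⟩
    have hxne : x ≠ 0 := by
      rintro rfl; rw [mul_zero] at hx; exact hgne hx
    have hpow : (g : ZMod p) ^ ((p - 1) / 2) = 1 := by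
      have h2 : (p - 1) / 2 * 2 = p - 1 := by
        obtain ⟨k, rfl⟩ := hodd; omega
      rw [hx, ← pow_two, ← pow_mul, mul_comm 2, h2, ZMod.pow_card_sub_one_eq_one hxne]
    have hdvd : orderOf ((g : ZMod p)) ∣ (p - 1) / 2 := orderOf_dvd_of_pow_eq_one hpow
    rw [hg] at hdvd
    have := Nat.le_of_dvd (by omega) hdvd
    omega
  have hcast_ne : ∀ r ∈ Finset.Icc 1 (p - 1), (r : ZMod p) ≠ 0 := by
    intro r hr
    rw [Finset.mem_Icc] at hr
    rw [Ne, ZMod.natCast_eq_zero_iff]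
    intro hdvd
    have := Nat.le_of_dvd (by omega) hdvd
    omega
  have hvc : ∀ x : ZMod p, ((x.val : ℕ) : ZMod p) = x := fun x => ZMod.natCast_rightInverse x
  -- the set of nonresidues
  set N : Finset ℕ := (Finset.Icc 1 (p - 1)).filter (fun r : ℕ => ¬ IsSquare ((r : ZMod p)))
    with hN
  -- membership helper for val of a nonzero element
  have hval_mem : ∀ x : ZMod p, x ≠ 0 → x.val ∈ Finset.Icc 1 (p - 1) := by
    intro x hx
    rw [Finset.mem_Icc]
    have h1 : x.val ≠ 0 := fun h => hx ((ZMod.val_eq_zero x).1 h)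
    have h2 : x.val < p := ZMod.val_lt x
    omega
  -- second product equals product over nonresidues
  have hΓ' : (∏ r ∈ R, (α - ζ ^ (g * r) * β)) = ∏ n ∈ N, (α - ζ ^ n * β) := by
    refine Finset.prod_nbij' (i := fun r => ((g : ZMod p) * (r : ZMod p)).val)
      (j := fun n => (((g : ZMod p))⁻¹ * (n : ZMod p)).val) ?_ ?_ ?_ ?_ ?_
    · intro r hr
      simp only [hR, Finset.mem_filter] at hr
      obtain ⟨hr1, hrsq⟩ := hr
      have hrne : (r : ZMod p) ≠ 0 := hcast_ne r hr1
      have hne : (g : ZMod p) * (r : ZMod p) ≠ 0 := mul_ne_zero hgne hrne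
      simp only [hN, Finset.mem_filter]
      refine ⟨hval_mem _ hne, ?_⟩
      rw [hvc]
      exact aux_not_isSquare_mul hrne hgns hrsq
    · intro n hn
      simp only [hN, Finset.mem_filter] at hn
      obtain ⟨hn1, hnns⟩ := hn
      have hnne : (n : ZMod p) ≠ 0 := hcast_ne n hn1
      have hgi : ((g : ZMod p))⁻¹ ≠ 0 := inv_ne_zero hgne
      have hne : ((g : ZMod p))⁻¹ * (n : ZMod p) ≠ 0 := mul_ne_zero hgi hnne
      simp only [hR, Finset.mem_filter]
      refine ⟨hval_mem _ hne, ?_⟩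
      rw [hvc]
      by_contra hns
      have := aux_isSquare_mul_of_not_of_not hgne hne hgns hns
      rw [mul_inv_cancel_left₀ hgne] at this
      exact hnns this
    · intro r hr
      simp only [hR, Finset.mem_filter] at hr
      have hrlt : r < p := by
        have := (Finset.mem_Icc.1 hr.1).2; omega
      simp only [hvc, inv_mul_cancel_left₀ hgne, mul_inv_cancel_left₀ hgne, ZMod.val_natCast]
      exact Nat.mod_eq_of_lt hrlt
    · intro n hn
      simp only [hN, Finset.mem_filter] at hn
      have hnlt : n < p := by
        have := (Finset.mem_Icc.1 hn.1).2; omega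
      simp only [hvc, inv_mul_cancel_left₀ hgne, mul_inv_cancel_left₀ hgne, ZMod.val_natCast]
      exact Nat.mod_eq_of_lt hnlt
    · intro r hr
      congr 2
      rw [pow_eq_pow_mod (g * r) hζp]
      congr 1
      rw [← ZMod.val_natCast, Nat.cast_mul]
  -- first product: exponents can be reduced, trivially, it's already over R
  -- combine: Γ * Γ' = product over Icc 1 (p-1)
  have hsplit : (∏ r ∈ R, (α - ζ ^ r * β)) * (∏ n ∈ N, (α - ζ ^ n * β))
      = ∏ k ∈ Finset.Icc 1 (p - 1), (α - ζ ^ k * β) := by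
    rw [hR, hN]
    rw [Finset.filter_congr_decidable, Finset.filter_congr_decidable]
    exact Finset.prod_filter_mul_prod_filter_not _ _ _
  -- the full product over all nonzero exponents
  have hfull : (α ^ p - β ^ p) = (α - β) * ∏ k ∈ Finset.Icc 1 (p - 1), (α - ζ ^ k * β) := by
    have hkey : α ^ p - β ^ p = ∏ μ ∈ Polynomial.nthRootsFinset p (1 : ℂ), (α - μ * β) :=
      hprim.pow_sub_pow_eq_prod_sub_mul α β hppos
    have himg : Polynomial.nthRootsFinset p (1 : ℂ) = (Finset.range p).image (ζ ^ ·) := by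
      ext x
      simp only [Polynomial.mem_nthRootsFinset hppos, Finset.mem_image, Finset.mem_range]
      constructor
      · intro hx
        obtain ⟨i, hi, hix⟩ := hprim.eq_pow_of_pow_eq_one hx
        exact ⟨i, hi, hix⟩
      · rintro ⟨i, _, rfl⟩
        rw [← pow_mul, mul_comm, pow_mul, hζp, one_pow]
    rw [hkey, himg, Finset.prod_image (fun x hx y hy hxy => hprim.injOn_pow
      (by simpa using hx) (by simpa using hy) hxy)]
    rw [Finset.range_eq_Ico, Finset.prod_eq_prod_Ico_succ_bot hppos]
    have hIco : Finset.Ico 1 p = Finset.Icc 1 (p - 1) := by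
      rw [← Finset.Ico_add_one_right_eq_Icc]
      congr 1
      omega
    rw [pow_zero, one_mul, hIco]
  -- Binet
  have h5 : (0:ℝ) < Real.sqrt 5 := Real.sqrt_pos.2 (by norm_num)
  have h5c : ((Real.sqrt 5 : ℝ) : ℂ) ≠ 0 := by
    simpa using h5.ne'
  have hαβ : α - β = ((Real.sqrt 5 : ℝ) : ℂ) := by
    rw [hα, hβ]; ring
  have hbinet : (Nat.fib p : ℂ) * ((Real.sqrt 5 : ℝ) : ℂ) = α ^ p - β ^ p := by
    have hreal : (Nat.fib p : ℝ) * Real.sqrt 5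
        = ((1 + Real.sqrt 5) / 2) ^ p - ((1 - Real.sqrt 5) / 2) ^ p := by
      have hb := Real.coe_fib_eq p
      rw [Real.goldenRatio, Real.goldenConj] at hb
      rw [hb]
      field_simp
    have := congrArg (Complex.ofReal) hreal
    push_cast at this ⊢
    rw [hα, hβ]
    push_cast
    exact this
  have hne : α ^ p - β ^ p
      = ((Real.sqrt 5 : ℝ) : ℂ) * ((∏ r ∈ R, (α - ζ ^ r * β)) * (∏ r ∈ R, (α - ζ ^ (g * r) * β))) := by
    rw [hfull, hαβ, hΓ', hsplit]
  have h := hbinet.trans hne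
  rw [mul_comm (((Real.sqrt 5 : ℝ) : ℂ))] at h
  exact mul_right_cancel₀ h5c h
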